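/- arXiv:2512.09526 — 4 statements merged into one kernel-verified Lean document; each statement's English description precedes it below -/
import Mathlib

section
/- Let f = Σ_{i=0}^d f_i X^{q^i} ∈ F[X] be a q-linearized polynomial with f₀ ≠ 0 and f_d ≠ 0 (so f is separable of degree q^d). For z ∈ ℝ set N_f(z) = #{β ∈ F̄ : f(β) = 0 and (β = 0 or ν(β) ≥ z)}. Then for every z ∈ ℝ which is not of the form ν(β) for a nonzero root β of f in F̄, the function V_f : ℝ → ℝ is differentiable at z with derivative V_f′(z) = N_f(z). -/
open Polynomial

/-- A polynomial is `q`-linearized if it is of the form `Σ fᵢ X^(qⁱ)`. -/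
def IsqLin {F : Type*} [Field F] (q : ℕ) (f : Polynomial F) : Prop :=
  ∀ n, f.coeff n ≠ 0 → ∃ i : ℕ, n = q ^ i

/-- The valuation polygon `V_f(z) = min { ν(fᵢ) + qⁱ z : fᵢ ≠ 0 }` of a nonzero
`q`-linearized polynomial. -/
noncomputable def Vpoly {F : Type*} [Field F] (q : ℕ) (ν : F → ℚ) (f : Polynomial F)
    (z : ℝ) : ℝ :=
  sInf {y : ℝ | ∃ i : ℕ, f.coeff (q ^ i) ≠ 0 ∧
    y = (ν (f.coeff (q ^ i)) : ℝ) + (q : ℝ) ^ i * z}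

namespace Stmt9Aux

variable {K : Type*} [Field K] (ν : K → ℚ)

/-- valuation with top -/
noncomputable def wv (x : K) : WithTop ℝ := letI := Classical.dec (x = 0); if x = 0 then ⊤ else ((ν x : ℝ) : WithTop ℝ)

variable (hmul : ∀ x y : K, x ≠ 0 → y ≠ 0 → ν (x * y) = ν x + ν y)
  (hadd : ∀ x y : K, x ≠ 0 → y ≠ 0 → x + y ≠ 0 → min (ν x) (ν y) ≤ ν (x + y))

lemma wv_zero : wv ν (0 : K) = ⊤ := by simp [wv]

lemma wv_ne_top {x : K} (hx : x ≠ 0) : wv ν x = ((ν x : ℝ) : WithTop ℝ) := by simp [wv, hx]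

lemma wv_eq_top_iff {x : K} : wv ν x = ⊤ ↔ x = 0 := by
  constructor
  · intro h; by_contra hx; rw [wv_ne_top ν hx] at h; exact (WithTop.coe_ne_top h)
  · intro h; subst h; exact wv_zero ν

include hmul in
lemma wv_mul (x y : K) : wv ν (x * y) = wv ν x + wv ν y := by
  by_cases hx : x = 0
  · simp [hx, wv_zero]
  by_cases hy : y = 0
  · simp [hy, wv_zero]
  rw [wv_ne_top ν hx, wv_ne_top ν hy, wv_ne_top ν (mul_ne_zero hx hy), hmul x y hx hy]
  push_cast
  rfl

include hmul in
lemma nu_one : ν 1 = 0 := by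
  have := hmul 1 1 one_ne_zero one_ne_zero
  simp at this
  linarith

include hmul in
lemma nu_neg_one : ν (-1 : K) = 0 := by
  have := hmul (-1) (-1) (by norm_num) (by norm_num)
  simp [nu_one ν hmul] at this
  linarith

include hmul in
lemma nu_neg {x : K} (hx : x ≠ 0) : ν (-x) = ν x := by
  have := hmul (-1) x (by norm_num) hx
  simp [nu_neg_one ν hmul] at this
  simpa using this

include hmul in
lemma wv_neg (x : K) : wv ν (-x) = wv ν x := by
  by_cases hx : x = 0
  · simp [hx]
  · rw [wv_ne_top ν hx, wv_ne_top ν (neg_ne_zero.mpr hx), nu_neg ν hmul hx]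

include hadd in
lemma wv_add (x y : K) : min (wv ν x) (wv ν y) ≤ wv ν (x + y) := by
  by_cases hx : x = 0
  · simp [hx, wv_zero]
  by_cases hy : y = 0
  · simp [hy, wv_zero]
  by_cases hxy : x + y = 0
  · simp [hxy, wv_zero]
  rw [wv_ne_top ν hx, wv_ne_top ν hy, wv_ne_top ν hxy]
  have := hadd x y hx hy hxy
  rw [← WithTop.coe_min]
  rw [WithTop.coe_le_coe]
  have : ((min (ν x) (ν y) : ℚ) : ℝ) ≤ ((ν (x+y) : ℚ) : ℝ) := by exact_mod_cast this
  refine le_trans (le_of_eq ?_) this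
  push_cast
  rfl

include hadd in
lemma wv_sum_le {b : WithTop ℝ} : ∀ {s : Multiset K}, (∀ a ∈ s, b ≤ wv ν a) → b ≤ wv ν s.sum := by
  intro s
  induction s using Multiset.induction with
  | empty => intro _; simp [wv_zero]
  | cons a t ih =>
    intro h
    simp only [Multiset.sum_cons]
    refine le_trans ?_ (wv_add ν hadd a t.sum)
    rw [le_min_iff]
    exact ⟨h a (Multiset.mem_cons_self a t), ih fun x hx => h x (Multiset.mem_cons_of_mem hx)⟩

include hadd in
lemma wv_sum_lt {b : ℝ} {s : Multiset K} (h : ∀ a ∈ s, (b : WithTop ℝ) < wv ν a) :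
    (b : WithTop ℝ) < wv ν s.sum := by
  induction s using Multiset.induction with
  | empty => simp [wv_zero]
  | cons a t ih =>
    simp only [Multiset.sum_cons]
    have h1 : (b : WithTop ℝ) < wv ν a := h a (Multiset.mem_cons_self a t)
    have h2 : (b : WithTop ℝ) < wv ν t.sum := ih fun x hx => h x (Multiset.mem_cons_of_mem hx)
    calc (b : WithTop ℝ) < min (wv ν a) (wv ν t.sum) := lt_min h1 h2
    _ ≤ wv ν (a + t.sum) := wv_add ν hadd a t.sum

include hmul in
lemma wv_prod (s : Multiset K) : wv ν s.prod = (s.map (wv ν)).sum := by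
  induction s using Multiset.induction with
  | empty => simp [wv, nu_one ν hmul]
  | cons a t ih => simp [wv_mul ν hmul, ih]

include hmul hadd in
lemma wv_add_eq {x y : K} (h : wv ν x < wv ν y) : wv ν (x + y) = wv ν x := by
  refine le_antisymm ?_ ?_
  · have h2 := wv_add ν hadd (x + y) (-y)
    rw [wv_neg ν hmul, add_neg_cancel_right] at h2
    rcases le_total (wv ν (x + y)) (wv ν y) with hc | hc
    · rw [min_eq_left hc] at h2; exact h2
    · rw [min_eq_right hc] at h2; exact absurd (lt_of_lt_of_le h h2) (lt_irrefl _)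
  · calc wv ν x = min (wv ν x) (wv ν y) := (min_eq_left h.le).symm
    _ ≤ wv ν (x + y) := wv_add ν hadd x y

lemma wadd_lt_of_le_of_lt {a b : ℝ} {X Y : WithTop ℝ} (h1 : (a : WithTop ℝ) ≤ X)
    (h2 : (b : WithTop ℝ) < Y) : ((a + b : ℝ) : WithTop ℝ) < X + Y := by
  induction X using WithTop.recTopCoe with
  | top => simp [WithTop.top_add]
  | coe x =>
    induction Y using WithTop.recTopCoe with
    | top =>
      rw [WithTop.add_top]; exact WithTop.coe_lt_top _
    | coe y =>
      rw [← WithTop.coe_add, WithTop.coe_lt_coe]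
      rw [WithTop.coe_le_coe] at h1
      rw [WithTop.coe_lt_coe] at h2
      linarith

lemma wadd_le_add {a b : ℝ} {X Y : WithTop ℝ} (h1 : (a : WithTop ℝ) ≤ X)
    (h2 : (b : WithTop ℝ) ≤ Y) : ((a + b : ℝ) : WithTop ℝ) ≤ X + Y := by
  induction X using WithTop.recTopCoe with
  | top => simp [WithTop.top_add]
  | coe x =>
    induction Y using WithTop.recTopCoe with
    | top => rw [WithTop.add_top]; exact le_top
    | coe y =>
      rw [← WithTop.coe_add, WithTop.coe_le_coe]
      rw [WithTop.coe_le_coe] at h1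
      rw [WithTop.coe_le_coe] at h2
      linarith

lemma wcoe_map_sum {α : Type*} (s : Multiset α) (g : α → ℝ) :
    (((s.map g).sum : ℝ) : WithTop ℝ) = (s.map (fun a => ((g a : ℝ) : WithTop ℝ))).sum := by
  induction s using Multiset.induction with
  | empty => simp
  | cons a t ih => simp [ih]

lemma wcoe_multiset_sum (s : Multiset ℝ) : ((s.sum : ℝ) : WithTop ℝ) = (s.map (fun r => (r : WithTop ℝ))).sum := by
  induction s using Multiset.induction with
  | empty => simp
  | cons a t ih => simp [ih]

/-- sum lower bound for a multiset, real version via map -/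
lemma wsum_map_le {α : Type*} (s : Multiset α) (g : α → ℝ) (G : α → WithTop ℝ)
    (h : ∀ a ∈ s, (g a : WithTop ℝ) ≤ G a) :
    (((s.map g).sum : ℝ) : WithTop ℝ) ≤ (s.map G).sum := by
  induction s using Multiset.induction with
  | empty => simp
  | cons a t ih =>
    simp only [Multiset.map_cons, Multiset.sum_cons]
    exact wadd_le_add (h a (Multiset.mem_cons_self a t)) (ih fun x hx => h x (Multiset.mem_cons_of_mem hx))


include hmul in
lemma nu_pow {x : K} (hx : x ≠ 0) : ∀ n : ℕ, ν (x ^ n) = n * ν x := by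
  intro n
  induction n with
  | zero => simp [nu_one ν hmul]
  | succ k ih =>
    rw [pow_succ, hmul _ _ (pow_ne_zero k hx) hx, ih]
    push_cast
    ring

lemma wv_card_mul_lt_sum {r : ℝ} {s : Multiset K} (hs : s ≠ 0)
    (h : ∀ a ∈ s, (r : WithTop ℝ) < wv ν a) :
    (((s.card : ℝ) * r : ℝ) : WithTop ℝ) < (s.map (wv ν)).sum := by
  induction s using Multiset.induction with
  | empty => exact absurd rfl hs
  | cons a t ih =>
    simp only [Multiset.map_cons, Multiset.sum_cons]
    by_cases ht : t = 0
    · subst ht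
      simp only [Multiset.card_cons, Multiset.card_zero, Multiset.map_zero, Multiset.sum_zero,
        add_zero]
      norm_num
      exact h a (Multiset.mem_cons_self a 0)
    · have h1 : (r : WithTop ℝ) < wv ν a := h a (Multiset.mem_cons_self a t)
      have h2 := ih ht (fun x hx => h x (Multiset.mem_cons_of_mem hx))
      have hcard : ((Multiset.card (a ::ₘ t) : ℝ) * r : ℝ) = r + (Multiset.card t : ℝ) * r := by
        simp [Multiset.card_cons]; ring
      rw [hcard]
      exact wadd_lt_of_le_of_lt (le_of_lt h1) h2

/-- additivity of a q-linearized polynomial over a field of char p with q = p^e -/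
lemma eval_add_of_qlin {q p e : ℕ} [Fact p.Prime] [CharP K p] (he : q = p ^ e)
    {g : K[X]} (hg : ∀ n, g.coeff n ≠ 0 → ∃ i : ℕ, n = q ^ i) (x y : K) :
    g.eval (x + y) = g.eval x + g.eval y := by
  rw [Polynomial.eval_eq_sum, Polynomial.eval_eq_sum, Polynomial.eval_eq_sum,
    Polynomial.sum_def, Polynomial.sum_def, Polynomial.sum_def, ← Finset.sum_add_distrib]
  refine Finset.sum_congr rfl fun n hn => ?_
  obtain ⟨i, rfl⟩ := hg n (Polynomial.mem_support_iff.mp hn)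
  have : (x + y) ^ q ^ i = x ^ q ^ i + y ^ q ^ i := by
    subst he
    simp only [← pow_mul]
    exact add_pow_char_pow x y p (e * i)
  rw [this, mul_add]

/-- Fq-semilinearity: if c^q = c then g(c x) = c g(x) for q-linearized g -/
lemma eval_smul_of_qlin {q : ℕ} {g : K[X]} (hg : ∀ n, g.coeff n ≠ 0 → ∃ i : ℕ, n = q ^ i)
    {c : K} (hc : c ^ q = c) (x : K) :
    g.eval (c * x) = c * g.eval x := by
  have hci : ∀ i : ℕ, c ^ q ^ i = c := by
    intro i
    induction i with
    | zero => simp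
    | succ k ih => rw [pow_succ, pow_mul, ih, hc]
  rw [Polynomial.eval_eq_sum, Polynomial.eval_eq_sum, Polynomial.sum_def, Polynomial.sum_def,
    Finset.mul_sum]
  refine Finset.sum_congr rfl fun n hn => ?_
  obtain ⟨i, rfl⟩ := hg n (Polynomial.mem_support_iff.mp hn)
  rw [mul_pow, hci i]
  ring

end Stmt9Aux


open Stmt9Aux in
theorem stmt9 {Fq F : Type*} [Field Fq] [Fintype Fq] [Field F] [Algebra Fq F]
    (q : ℕ) (hq : q = Fintype.card Fq)
    (ν : AlgebraicClosure F → ℚ)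
    (hmul : ∀ x y : AlgebraicClosure F, x ≠ 0 → y ≠ 0 → ν (x * y) = ν x + ν y)
    (hadd : ∀ x y : AlgebraicClosure F, x ≠ 0 → y ≠ 0 → x + y ≠ 0 →
      min (ν x) (ν y) ≤ ν (x + y))
    (f : Polynomial F) (hf : IsqLin q f) (d : ℕ)
    (hf0 : f.coeff 1 ≠ 0) (hfd : f.coeff (q ^ d) ≠ 0) (hdeg : f.natDegree = q ^ d)
    (z : ℝ)
    (hz : ∀ β : AlgebraicClosure F, Polynomial.aeval β f = 0 → β ≠ 0 → (ν β : ℝ) ≠ z) :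
    HasDerivAt (Vpoly q (fun t => ν (algebraMap F (AlgebraicClosure F) t)) f)
      (Nat.card {β : AlgebraicClosure F //
        Polynomial.aeval β f = 0 ∧ (β = 0 ∨ z ≤ (ν β : ℝ))} : ℝ) z := by
  classical
  have hq2 : 2 ≤ q := by
    rw [hq]; exact Fintype.one_lt_card
  set p := ringChar Fq with hpdef
  haveI hcFq : CharP Fq p := ringChar.charP Fq
  obtain ⟨e, hpe, hqpe⟩ := FiniteField.card Fq p
  haveI : Fact p.Prime := ⟨hpe⟩
  have hqp : q = p ^ (e : ℕ) := by rw [hq, hqpe]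
  haveI : CharP F p := charP_of_injective_ringHom (algebraMap Fq F).injective p
  haveI : CharP (AlgebraicClosure F) p :=
    charP_of_injective_ringHom (algebraMap F (AlgebraicClosure F)).injective p
  set φ := algebraMap F (AlgebraicClosure F) with hφdef
  set g := f.map φ with hgdef
  have hf_ne : f ≠ 0 := fun h => hfd (by simp [h])
  have hg_ne : g ≠ 0 := Polynomial.map_ne_zero hf_ne
  have hgcoeff : ∀ m', g.coeff m' = φ (f.coeff m') := fun m' => Polynomial.coeff_map φ m'
  have hgcoeff_ne : ∀ m', f.coeff m' ≠ 0 → g.coeff m' ≠ 0 := by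
    intro m' h hg0
    exact h (by rwa [hgcoeff, _root_.map_eq_zero] at hg0)
  have hgdeg : g.natDegree = q ^ d := by rw [hgdef, Polynomial.natDegree_map, hdeg]
  have hsplits : g.Splits :=
    IsAlgClosed.splits g
  set R := g.roots with hRdef
  have hRcard : Multiset.card R = q ^ d := by
    rw [← hgdeg]; exact (Polynomial.splits_iff_card_roots.mp hsplits)
  have haeval_eq : ∀ β, Polynomial.aeval β f = g.eval β := by
    intro β; rw [Polynomial.aeval_def, hgdef, Polynomial.eval_map]
  have hroot_iff : ∀ β, (Polynomial.aeval β f = 0 ↔ β ∈ R) := by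
    intro β
    rw [haeval_eq, hRdef, Polynomial.mem_roots hg_ne]
    exact Iff.rfl
  -- separability
  have hqF0 : (q : F) = 0 := by
    rw [hqp]; push_cast
    rw [CharP.cast_eq_zero F p]
    exact zero_pow (by exact_mod_cast e.pos.ne')
  have hfder : Polynomial.derivative f = Polynomial.C (f.coeff 1) := by
    ext n
    rw [Polynomial.coeff_derivative, Polynomial.coeff_C]
    rcases Nat.eq_zero_or_pos n with rfl | hn
    · simp
    · rw [if_neg (by omega)]
      by_cases h : f.coeff (n + 1) = 0
      · rw [h, zero_mul]
      · obtain ⟨i, hi⟩ := hf (n + 1) h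
        have hi1 : 1 ≤ i := by
          rcases Nat.eq_zero_or_pos i with rfl | h1
          · simp at hi; omega
          · exact h1
        have hcast : ((n : F) + 1) = 0 := by
          have h2 : ((n + 1 : ℕ) : F) = ((q ^ i : ℕ) : F) := by rw [hi]
          push_cast at h2
          rw [h2, hqF0]
          exact zero_pow (by omega)
        rw [hcast, mul_zero]
  have hfsep : f.Separable := by
    refine ⟨0, Polynomial.C (f.coeff 1)⁻¹, ?_⟩
    rw [hfder, zero_mul, zero_add, ← Polynomial.C_mul, inv_mul_cancel₀ hf0, Polynomial.C_1]
  have hnodup : R.Nodup := Polynomial.nodup_roots hfsep.map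
  have hcoeff0 : f.coeff 0 = 0 := by
    by_contra h
    obtain ⟨i, hi⟩ := hf 0 h
    have : 0 < q ^ i := pow_pos (by omega) i
    omega
  have hzero_mem : (0 : AlgebraicClosure F) ∈ R := by
    rw [← hroot_iff, haeval_eq, ← Polynomial.coeff_zero_eq_eval_zero, hgcoeff, hcoeff0, map_zero]
  -- epsilon
  obtain ⟨ε, hε, hεsep⟩ : ∃ ε > 0, ∀ β ∈ R, β ≠ 0 → (ν β : ℝ) ∉ Set.Ioo (z - ε) (z + ε) := by
    set B : Finset ℝ := (R.toFinset.erase 0).image (fun β => ((ν β : ℝ))) with hBdef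
    by_cases hB : B.Nonempty
    · refine ⟨(B.image (fun t => |t - z|)).min' (hB.image _), ?_, ?_⟩
      · obtain ⟨t, htB, hteq⟩ :=
          Finset.mem_image.mp ((B.image (fun t => |t - z|)).min'_mem (hB.image _))
        obtain ⟨β, hβ, rfl⟩ := Finset.mem_image.mp htB
        have hβ0 : β ≠ 0 := (Finset.mem_erase.mp hβ).1
        have hβR : β ∈ R := Multiset.mem_toFinset.mp (Finset.mem_erase.mp hβ).2
        have hne : (ν β : ℝ) ≠ z := hz β ((hroot_iff β).mpr hβR) hβ0
        rw [← hteq]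
        exact abs_pos.mpr (sub_ne_zero.mpr hne)
      · intro β hβR hβ0 hIoo
        obtain ⟨h1, h2⟩ := hIoo
        have hmem : |(ν β : ℝ) - z| ∈ B.image (fun t => |t - z|) :=
          Finset.mem_image.mpr ⟨_, Finset.mem_image.mpr
            ⟨β, Finset.mem_erase.mpr ⟨hβ0, Multiset.mem_toFinset.mpr hβR⟩, rfl⟩, rfl⟩
        have hle := Finset.min'_le _ _ hmem
        have habs : |(ν β : ℝ) - z| < (B.image (fun t => |t - z|)).min' (hB.image _) :=
          abs_sub_lt_iff.mpr ⟨by linarith, by linarith⟩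
        exact absurd hle (not_le.mpr habs)
    · refine ⟨1, one_pos, ?_⟩
      intro β hβR hβ0 _
      exact hB ⟨_, Finset.mem_image.mpr
        ⟨β, Finset.mem_erase.mpr ⟨hβ0, Multiset.mem_toFinset.mpr hβR⟩, rfl⟩⟩
  -- low filter
  set low : AlgebraicClosure F → Prop := fun β => β ≠ 0 ∧ (ν β : ℝ) < z with hlowdef
  set A := R.filter low with hAdef
  set M := R.filter (fun β => ¬ low β) with hMdef
  set m := Multiset.card M with hmdef
  set k := Multiset.card A with hkdef
  have hRsplit : A + M = R := Multiset.filter_add_not low R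
  have hkm : k + m = q ^ d := by
    rw [hkdef, hmdef, ← Multiset.card_add, hRsplit, hRcard]
  have hA_le : A ≤ R := Multiset.filter_le low R
  have hM_le : M ≤ R := Multiset.filter_le _ R
  have hAlow : ∀ β ∈ A, β ≠ 0 ∧ (ν β : ℝ) < z := fun β hβ => (Multiset.mem_filter.mp hβ).2
  have hAlow_le : ∀ β ∈ A, (ν β : ℝ) ≤ z - ε := by
    intro β hβ
    have h1 := hAlow β hβ
    have h2 := hεsep β (Multiset.mem_of_le hA_le hβ) h1.1
    simp only [Set.mem_Ioo, not_and, not_lt] at h2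
    rcases le_or_gt (ν β : ℝ) (z - ε) with h | h
    · exact h
    · have := h2 h; linarith
  have hMhigh : ∀ β ∈ M, β = 0 ∨ z + ε ≤ (ν β : ℝ) := by
    intro β hβ
    obtain ⟨hβR, hβnl⟩ := Multiset.mem_filter.mp hβ
    by_cases hβ0 : β = 0
    · exact Or.inl hβ0
    right
    have hne := hz β ((hroot_iff β).mpr hβR) hβ0
    have hge : z ≤ (ν β : ℝ) := by
      by_contra hlt
      push_neg at hlt
      exact hβnl ⟨hβ0, hlt⟩
    have h2 := hεsep β hβR hβ0
    simp only [Set.mem_Ioo, not_and, not_lt] at h2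
    exact h2 (by linarith)
  -- counting
  have hcount : Nat.card {β : AlgebraicClosure F //
      Polynomial.aeval β f = 0 ∧ (β = 0 ∨ z ≤ (ν β : ℝ))} = m := by
    have hseteq : {β : AlgebraicClosure F | Polynomial.aeval β f = 0 ∧ (β = 0 ∨ z ≤ (ν β : ℝ))}
        = ↑(Multiset.toFinset M) := by
      ext β
      rw [Set.mem_setOf_eq, Finset.mem_coe, Multiset.mem_toFinset, hMdef, Multiset.mem_filter]
      constructor
      · rintro ⟨h1, h2⟩
        refine ⟨(hroot_iff β).mp h1, ?_⟩
        simp only [hlowdef]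
        rintro ⟨hb0, hblt⟩
        rcases h2 with rfl | hle
        · exact hb0 rfl
        · exact absurd hblt (not_lt.mpr hle)
      · rintro ⟨h1, h2⟩
        refine ⟨(hroot_iff β).mpr h1, ?_⟩
        simp only [hlowdef] at h2
        by_cases hb0 : β = 0
        · exact Or.inl hb0
        · right
          by_contra hlt
          push_neg at hlt
          exact h2 ⟨hb0, hlt⟩
    have h2 : Nat.card {β : AlgebraicClosure F |
        Polynomial.aeval β f = 0 ∧ (β = 0 ∨ z ≤ (ν β : ℝ))} = m := by
      rw [Nat.card_coe_set_eq, hseteq, Set.ncard_coe_finset,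
        Multiset.toFinset_card_of_nodup (hnodup.filter _)]
    exact h2
  -- m is a power of q
  obtain ⟨istar, histar⟩ : ∃ i : ℕ, m = q ^ i := by
    have hgqlin : ∀ n, g.coeff n ≠ 0 → ∃ i : ℕ, n = q ^ i := by
      intro n h
      refine hf n ?_
      intro h0
      exact h (by rw [hgcoeff, h0, map_zero])
    have haddf : ∀ x y : AlgebraicClosure F,
        Polynomial.aeval (x + y) f = Polynomial.aeval x f + Polynomial.aeval y f := by
      intro x y
      rw [haeval_eq, haeval_eq, haeval_eq]
      exact eval_add_of_qlin hqp hgqlin x y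
    have haeval0 : Polynomial.aeval (0 : AlgebraicClosure F) f = 0 := (hroot_iff 0).mpr hzero_mem
    have hpowq : ∀ cq : Fq, (algebraMap Fq (AlgebraicClosure F) cq) ^ q
        = algebraMap Fq (AlgebraicClosure F) cq := by
      intro cq
      rw [← map_pow, hq, FiniteField.pow_card]
    have hsmulf : ∀ (cq : Fq) (x : AlgebraicClosure F),
        Polynomial.aeval (algebraMap Fq (AlgebraicClosure F) cq * x) f
          = algebraMap Fq (AlgebraicClosure F) cq * Polynomial.aeval x f := by
      intro cq x
      rw [haeval_eq, haeval_eq]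
      exact eval_smul_of_qlin hgqlin (hpowq cq) x
    have hnu_alg : ∀ cq : Fq, cq ≠ 0 → ν (algebraMap Fq (AlgebraicClosure F) cq) = 0 := by
      intro cq h0
      have hcne : algebraMap Fq (AlgebraicClosure F) cq ≠ 0 := by
        simpa using h0
      have h1 := nu_pow ν hmul hcne q
      rw [hpowq cq] at h1
      have h3 : ((q : ℚ) - 1) * ν (algebraMap Fq (AlgebraicClosure F) cq) = 0 := by
        linarith
      rcases mul_eq_zero.mp h3 with h4 | h4
      · exfalso
        have : (2 : ℚ) ≤ (q : ℚ) := by exact_mod_cast hq2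
        linarith
      · exact h4
    let Vsub : Submodule Fq (AlgebraicClosure F) :=
      { carrier := {β : AlgebraicClosure F | Polynomial.aeval β f = 0 ∧ (β = 0 ∨ z ≤ (ν β : ℝ))}
        add_mem' := by
          rintro x y ⟨hx1, hx2⟩ ⟨hy1, hy2⟩
          refine ⟨by rw [haddf, hx1, hy1, add_zero], ?_⟩
          rcases eq_or_ne x 0 with rfl | hx0
          · simpa using hy2
          rcases eq_or_ne y 0 with rfl | hy0
          · simpa using hx2
          rcases eq_or_ne (x + y) 0 with h0 | hxy0
          · exact Or.inl h0
          right
          have hx2' : z ≤ (ν x : ℝ) := hx2.resolve_left hx0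
          have hy2' : z ≤ (ν y : ℝ) := hy2.resolve_left hy0
          have hmm := hadd x y hx0 hy0 hxy0
          have hcast : ((min (ν x) (ν y) : ℚ) : ℝ) ≤ ((ν (x + y) : ℚ) : ℝ) := by
            exact_mod_cast hmm
          rw [Rat.cast_min] at hcast
          calc z ≤ min ((ν x : ℝ)) ((ν y : ℝ)) := le_min hx2' hy2'
          _ ≤ _ := hcast
        zero_mem' := ⟨haeval0, Or.inl rfl⟩
        smul_mem' := by
          intro cq x hx
          obtain ⟨hx1, hx2⟩ := hx
          rcases eq_or_ne cq 0 with rfl | hc0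
          · rw [zero_smul]; exact ⟨haeval0, Or.inl rfl⟩
          have hsm : cq • x = algebraMap Fq (AlgebraicClosure F) cq * x := Algebra.smul_def cq x
          refine ⟨by rw [hsm, hsmulf, hx1, mul_zero], ?_⟩
          rcases eq_or_ne x 0 with rfl | hx0
          · left; rw [hsm, mul_zero]
          right
          have hcne : algebraMap Fq (AlgebraicClosure F) cq ≠ 0 := by simpa using hc0
          rw [hsm]
          have hνm := hmul _ x hcne hx0
          rw [hnu_alg cq hc0, zero_add] at hνm
          rw [hνm]
          exact hx2.resolve_left hx0 }
    have hVfin : {β : AlgebraicClosure F |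
        Polynomial.aeval β f = 0 ∧ (β = 0 ∨ z ≤ (ν β : ℝ))}.Finite := by
      refine Set.Finite.subset R.finite_toSet ?_
      intro β hβ
      exact (hroot_iff β).mp hβ.1
    haveI hVft : Fintype Vsub := hVfin.fintype
    have hcard1 : Fintype.card Vsub = Fintype.card Fq ^ Module.finrank Fq Vsub :=
      Module.card_eq_pow_finrank
    refine ⟨Module.finrank Fq Vsub, ?_⟩
    have htype : Nat.card {β : AlgebraicClosure F //
        Polynomial.aeval β f = 0 ∧ (β = 0 ∨ z ≤ (ν β : ℝ))} = Nat.card Vsub :=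
      Nat.card_congr (Equiv.subtypeEquivRight (fun β => Iff.rfl))
    rw [← hcount, htype, Nat.card_eq_fintype_card, hcard1, hq]
  -- factorization of g
  set c := φ (f.coeff (q ^ d)) with hcdef
  have hc_ne : c ≠ 0 := by rw [hcdef]; simpa using hfd
  have hlead : g.leadingCoeff = c := by
    rw [Polynomial.leadingCoeff, hgdeg, hgcoeff]
  have hgfact : g = Polynomial.C c * (R.map (fun a => Polynomial.X - Polynomial.C a)).prod := by
    conv_lhs => rw [hsplits.eq_prod_roots]
    rw [hlead]
  have hcoeff_formula : ∀ m' , m' ≤ q ^ d →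
      g.coeff m' = c * ((-1) ^ (q ^ d - m') * R.esymm (q ^ d - m')) := by
    intro m' hm'
    conv_lhs => rw [hgfact]
    rw [Polynomial.coeff_C_mul, Multiset.prod_X_sub_C_coeff R (by rw [hRcard]; exact hm'),
      hRcard]
  set LA : ℝ := ((A.map (fun β => ((ν β : ℝ)))).sum) with hLAdef
  have hwA : wv ν A.prod = ((LA : ℝ) : WithTop ℝ) := by
    rw [wv_prod ν hmul, hLAdef, wcoe_map_sum]
    exact congrArg Multiset.sum
      (Multiset.map_congr rfl (fun β hβ => wv_ne_top ν (hAlow β hβ).1))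
  -- strict minimality of A among k-subsets
  have hstrict : ∀ t ∈ Multiset.powersetCard k R, t ≠ A →
      ((LA : ℝ) : WithTop ℝ) < wv ν t.prod := by
    intro t ht htA
    obtain ⟨htR, htcard⟩ := Multiset.mem_powersetCard.mp ht
    set s1 := t ∩ A with hs1def
    have hs1t : s1 ≤ t := Multiset.inter_le_left
    have hs1A : s1 ≤ A := Multiset.inter_le_right
    set u := t - s1 with hudef
    set v := A - s1 with hvdef
    have htdec : s1 + u = t := by rw [hudef, add_comm]; exact tsub_add_cancel_of_le hs1t
    have hAdec : s1 + v = A := by rw [hvdef, add_comm]; exact tsub_add_cancel_of_le hs1A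
    have hcards : Multiset.card u = Multiset.card v := by
      have h1 := congrArg Multiset.card htdec
      have h2 := congrArg Multiset.card hAdec
      rw [Multiset.card_add] at h1 h2
      omega
    have hune : u ≠ 0 := by
      intro h0
      apply htA
      have hle : t ≤ A := by rw [← htdec, h0, add_zero]; exact hs1A
      exact Multiset.eq_of_le_of_card_le hle (by rw [htcard])
    have htnodup : t.Nodup := Multiset.nodup_of_le htR hnodup
    have hu_notA : ∀ β ∈ u, β ∉ A := by
      intro β hβu hβA
      have hcnt_t : Multiset.count β t ≤ 1 := Multiset.nodup_iff_count_le_one.mp htnodup β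
      have hcnt_u : 0 < Multiset.count β u := Multiset.count_pos.mpr hβu
      have hcnt_A : 0 < Multiset.count β A := Multiset.count_pos.mpr hβA
      have h1 : Multiset.count β s1 + Multiset.count β u = Multiset.count β t := by
        rw [← Multiset.count_add, htdec]
      have h2 : Multiset.count β s1 = min (Multiset.count β t) (Multiset.count β A) :=
        Multiset.count_inter β t A
      omega
    have hbound_u : ∀ β ∈ u, ((z : ℝ) : WithTop ℝ) < wv ν β := by
      intro β hβu
      have hβR : β ∈ R := Multiset.mem_of_le (le_trans tsub_le_self htR) hβu
      have hβA : β ∉ A := hu_notA β hβu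
      have hnl : ¬ low β := fun hl => hβA (Multiset.mem_filter.mpr ⟨hβR, hl⟩)
      by_cases hβ0 : β = 0
      · rw [hβ0, wv_zero]; exact WithTop.coe_lt_top z
      · have hne := hz β ((hroot_iff β).mpr hβR) hβ0
        have hge : z ≤ (ν β : ℝ) := by
          by_contra hlt; push_neg at hlt
          exact hnl (by simp only [hlowdef]; exact ⟨hβ0, hlt⟩)
        have hgt : z < (ν β : ℝ) := lt_of_le_of_ne hge (Ne.symm hne)
        rw [wv_ne_top ν hβ0]
        exact_mod_cast hgt
    have hsum_u : (((Multiset.card u : ℝ) * z : ℝ) : WithTop ℝ) < (u.map (wv ν)).sum :=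
      wv_card_mul_lt_sum ν hune hbound_u
    have hsum_s1 : (((s1.map (fun β => ((ν β : ℝ)))).sum : ℝ) : WithTop ℝ)
        = (s1.map (wv ν)).sum := by
      rw [wcoe_map_sum]
      exact congrArg Multiset.sum (Multiset.map_congr rfl
        (fun β hβ => (wv_ne_top ν ((hAlow β (Multiset.mem_of_le hs1A hβ)).1)).symm))
    have hsum_v : (v.map (fun β => ((ν β : ℝ)))).sum ≤ (Multiset.card v : ℝ) * z := by
      have h3 := Multiset.sum_le_card_nsmul (v.map (fun β => ((ν β : ℝ)))) z ?_
      · rw [Multiset.card_map] at h3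
        simpa [nsmul_eq_mul] using h3
      · intro x hx
        obtain ⟨β, hβv, rfl⟩ := Multiset.mem_map.mp hx
        have hβA : β ∈ A := Multiset.mem_of_le tsub_le_self hβv
        exact (hAlow β hβA).2.le
    have hLAsplit : LA = (s1.map (fun β => ((ν β : ℝ)))).sum
        + (v.map (fun β => ((ν β : ℝ)))).sum := by
      rw [hLAdef, ← hAdec, Multiset.map_add, Multiset.sum_add]
    have hwt : wv ν t.prod = (s1.map (wv ν)).sum + (u.map (wv ν)).sum := by
      rw [wv_prod ν hmul, ← htdec, Multiset.map_add, Multiset.sum_add]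
    rw [hwt]
    have hstep : ((((s1.map (fun β => ((ν β : ℝ)))).sum + (Multiset.card u : ℝ) * z : ℝ))
        : WithTop ℝ) < (s1.map (wv ν)).sum + (u.map (wv ν)).sum :=
      wadd_lt_of_le_of_lt (le_of_eq hsum_s1) hsum_u
    refine lt_of_le_of_lt ?_ hstep
    rw [WithTop.coe_le_coe, hLAsplit, hcards]
    linarith [hsum_v]
  -- exact valuation of esymm k
  have hwesymm : wv ν (R.esymm k) = ((LA : ℝ) : WithTop ℝ) := by
    have hAps : A ∈ Multiset.powersetCard k R := Multiset.mem_powersetCard.mpr ⟨hA_le, rfl⟩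
    have hps_nodup : (Multiset.powersetCard k R).Nodup := hnodup.powersetCard
    set S := (Multiset.powersetCard k R).erase A with hSdef
    have hcons : Multiset.powersetCard k R = A ::ₘ S := (Multiset.cons_erase hAps).symm
    have hesymm_eq : R.esymm k = A.prod + (S.map Multiset.prod).sum := by
      rw [Multiset.esymm, hcons, Multiset.map_cons, Multiset.sum_cons]
    have hSgt : ∀ x ∈ S.map Multiset.prod, ((LA : ℝ) : WithTop ℝ) < wv ν x := by
      intro x hx
      obtain ⟨t, htS, rfl⟩ := Multiset.mem_map.mp hx
      have htps : t ∈ Multiset.powersetCard k R := Multiset.mem_of_mem_erase htS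
      have htA : t ≠ A := by
        intro h; subst h; exact hps_nodup.notMem_erase htS
      exact hstrict t htps htA
    rw [hesymm_eq, wv_add_eq ν hmul hadd (by rw [hwA]; exact wv_sum_lt ν hadd hSgt), hwA]
  have hw_neg_one_pow : ∀ j : ℕ, wv ν ((-1 : AlgebraicClosure F) ^ j) = 0 := by
    intro j
    rcases neg_one_pow_eq_or (AlgebraicClosure F) j with h | h <;> rw [h]
    · rw [wv_ne_top ν one_ne_zero, nu_one ν hmul]; norm_num
    · rw [wv_ne_top ν (by norm_num), nu_neg_one ν hmul]; norm_num
  -- exact valuation of coeff m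
  have hmle : m ≤ q ^ d := by omega
  have hwcoeffm : wv ν (g.coeff m) = (((ν c : ℝ) + LA : ℝ) : WithTop ℝ) := by
    rw [hcoeff_formula m hmle]
    have hk' : q ^ d - m = k := by omega
    rw [hk', wv_mul ν hmul, wv_mul ν hmul, hw_neg_one_pow, hwesymm, wv_ne_top ν hc_ne]
    rw [zero_add, ← WithTop.coe_add]
  have hcoeffm_ne : g.coeff m ≠ 0 := by
    intro h
    rw [h, wv_zero] at hwcoeffm
    exact (WithTop.coe_ne_top hwcoeffm.symm)
  have hfcoeffm_ne : f.coeff m ≠ 0 := by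
    intro h
    exact hcoeffm_ne (by rw [hgcoeff, h, map_zero])
  have hnucoeffm : (ν (g.coeff m) : ℝ) = (ν c : ℝ) + LA := by
    have := hwcoeffm
    rw [wv_ne_top ν hcoeffm_ne] at this
    exact_mod_cast this
  -- Vpoly formula on the interval
  have hVform : ∀ z' ∈ Set.Ioo (z - ε) (z + ε),
      Vpoly q (fun t => ν (φ t)) f z' = ((ν c : ℝ) + LA) + (m : ℝ) * z' := by
    intro z' hzz'
    obtain ⟨hz'1, hz'2⟩ := hzz'
    set μ : AlgebraicClosure F → ℝ := fun β => if low β then ((ν β : ℝ)) else z' with hμdef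
    have hμA : ∀ β ∈ A, μ β = ((ν β : ℝ)) := by
      intro β hβ; simp only [hμdef]; rw [if_pos ((Multiset.mem_filter.mp hβ).2)]
    have hμM : ∀ β ∈ M, μ β = z' := by
      intro β hβ; simp only [hμdef]; rw [if_neg ((Multiset.mem_filter.mp hβ).2)]
    have hμle : ∀ β ∈ R, μ β ≤ z' := by
      intro β hβ
      simp only [hμdef]
      by_cases hl : low β
      · rw [if_pos hl]
        have h3 := hAlow_le β (Multiset.mem_filter.mpr ⟨hβ, hl⟩)
        linarith
      · rw [if_neg hl]
    have hμwv : ∀ β ∈ R, ((μ β : ℝ) : WithTop ℝ) ≤ wv ν β := by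
      intro β hβ
      by_cases hl : low β
      · simp only [hμdef]; rw [if_pos hl, wv_ne_top ν hl.1]
      · simp only [hμdef]; rw [if_neg hl]
        by_cases hβ0 : β = 0
        · rw [hβ0, wv_zero]; exact le_top
        · have hβM : β ∈ M := Multiset.mem_filter.mpr ⟨hβ, hl⟩
          rcases hMhigh β hβM with h | h
          · exact absurd h hβ0
          · rw [wv_ne_top ν hβ0, WithTop.coe_le_coe]
            linarith
    have hμRsum : (R.map μ).sum = LA + (m : ℝ) * z' := by
      rw [← hRsplit, Multiset.map_add, Multiset.sum_add]
      congr 1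
      · rw [hLAdef]; exact congrArg Multiset.sum (Multiset.map_congr rfl hμA)
      · rw [Multiset.map_congr rfl hμM, Multiset.map_const', Multiset.sum_replicate,
          ← hmdef]
        simp [nsmul_eq_mul]
    have hlower : ∀ i : ℕ, f.coeff (q ^ i) ≠ 0 →
        ((ν c : ℝ) + LA) + (m : ℝ) * z' ≤ ((ν (φ (f.coeff (q ^ i))) : ℝ)) + (q : ℝ) ^ i * z' := by
      intro i hci
      set m' := q ^ i with hm'def
      have hm'le : m' ≤ q ^ d := by
        rw [hm'def, ← hdeg]; exact Polynomial.le_natDegree_of_ne_zero hci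
      set k' := q ^ d - m' with hk'def
      have hgm' : g.coeff m' = c * ((-1) ^ k' * R.esymm k') := hcoeff_formula m' hm'le
      have hesymm_ge : (((LA + (m : ℝ) * z' - (m' : ℝ) * z' : ℝ)) : WithTop ℝ)
          ≤ wv ν (R.esymm k') := by
        rw [Multiset.esymm]
        refine wv_sum_le ν hadd ?_
        intro x hx
        obtain ⟨t, htps, rfl⟩ := Multiset.mem_map.mp hx
        obtain ⟨htR, htcard⟩ := Multiset.mem_powersetCard.mp htps
        obtain ⟨rest, hrest⟩ := Multiset.le_iff_exists_add.mp htR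
        have hrestcard : Multiset.card rest = m' := by
          have h4 := congrArg Multiset.card hrest
          rw [Multiset.card_add, hRcard] at h4
          omega
        have h1 : (((t.map μ).sum : ℝ) : WithTop ℝ) ≤ wv ν t.prod := by
          rw [wv_prod ν hmul]
          exact wsum_map_le t μ (wv ν) (fun a ha => hμwv a (Multiset.mem_of_le htR ha))
        refine le_trans ?_ h1
        rw [WithTop.coe_le_coe]
        have hsplitsum : (R.map μ).sum = (t.map μ).sum + (rest.map μ).sum := by
          rw [hrest, Multiset.map_add, Multiset.sum_add]
        have hrest_le : (rest.map μ).sum ≤ (m' : ℝ) * z' := by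
          have h5 := Multiset.sum_le_card_nsmul (rest.map μ) z' ?_
          · rw [Multiset.card_map, hrestcard] at h5
            simpa [nsmul_eq_mul] using h5
          · intro x hx
            obtain ⟨β, hβ, rfl⟩ := Multiset.mem_map.mp hx
            exact hμle β (Multiset.mem_of_le (by rw [hrest]; exact le_add_self) hβ)
        rw [hμRsum] at hsplitsum
        linarith [hrest_le, hsplitsum]
      have hgm'ne : g.coeff m' ≠ 0 := hgcoeff_ne m' hci
      have hwsum : ((((ν c : ℝ) + (LA + (m : ℝ) * z' - (m' : ℝ) * z') : ℝ)) : WithTop ℝ)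
          ≤ wv ν (g.coeff m') := by
        rw [hgm', wv_mul ν hmul, wv_mul ν hmul, hw_neg_one_pow, zero_add, wv_ne_top ν hc_ne]
        exact wadd_le_add (le_refl _) hesymm_ge
      rw [wv_ne_top ν hgm'ne, WithTop.coe_le_coe] at hwsum
      have hνeq : (ν (φ (f.coeff (q ^ i))) : ℝ) = (ν (g.coeff m') : ℝ) := by rw [hgcoeff]
      have hqpow : ((q : ℝ)) ^ i = ((m' : ℕ) : ℝ) := by rw [hm'def]; push_cast; ring
      rw [hνeq, hqpow]
      linarith [hwsum]
    have hfcoefstar : f.coeff (q ^ istar) ≠ 0 := by rw [← histar]; exact hfcoeffm_ne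
    unfold Vpoly
    refine IsLeast.csInf_eq ⟨⟨istar, hfcoefstar, ?_⟩, ?_⟩
    · have h1 : (ν (φ (f.coeff (q ^ istar))) : ℝ) = (ν c : ℝ) + LA := by
        rw [← hgcoeff]
        have h2 : g.coeff (q ^ istar) = g.coeff m := by rw [histar]
        rw [h2, hnucoeffm]
      have h2 : ((q : ℝ)) ^ istar = (m : ℝ) := by rw [histar]; push_cast; ring
      rw [h1, h2]
    · rintro y ⟨i, hci, rfl⟩
      exact hlower i hci
  -- conclusion
  have hmemz : z ∈ Set.Ioo (z - ε) (z + ε) := by constructor <;> linarith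
  rw [hcount]
  have haff : HasDerivAt (fun z' : ℝ => ((ν c : ℝ) + LA) + (m : ℝ) * z') (m : ℝ) z := by
    simpa using ((hasDerivAt_id z).const_mul (m : ℝ)).const_add ((ν c : ℝ) + LA)
  refine haff.congr_of_eventuallyEq ?_
  filter_upwards [Ioo_mem_nhds hmemz.1 hmemz.2] with z' hz' using hVform z' hz'
end

section
/- Let F be a field containing 𝔽q, with separable closure F^sep inside an algebraic closure F̄. Let G ⊆ F^sep be a finite-dimensional 𝔽q-subspace which is stable under every F-automorphism of F^sep. Then there is a unique q-linearized polynomial f ∈ F[X] whose coefficient of X equals 1 and whose set of roots in F̄ equals G; this f is separable of degree #G = q^{dim_{𝔽q} G}, namely f(X) = c·∏_{α∈G}(X − α) with c = ∏_{β∈G∖{0}}(−β)^{−1}. -/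
open Polynomial

section helpers

variable {Fq K : Type*} [Field Fq] [Fintype Fq] [Field K] [Algebra Fq K]

-- char facts
lemma q_pow_exists (q : ℕ) (hq : q = Fintype.card Fq) :
    ∃ (p k : ℕ), p.Prime ∧ CharP K p ∧ 0 < k ∧ q = p ^ k := by
  obtain ⟨p, hpc⟩ := CharP.exists Fq
  haveI := hpc
  obtain ⟨n, hn⟩ := FiniteField.card Fq p
  refine ⟨p, n, hn.1, charP_of_injective_algebraMap (algebraMap Fq K).injective p, n.2, ?_⟩
  rw [hq, hn.2]

lemma cast_q_eq_zero (q : ℕ) (hq : q = Fintype.card Fq) : (q : K) = 0 := by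
  subst hq
  rw [show ((Fintype.card Fq : ℕ) : K) = algebraMap Fq K ((Fintype.card Fq : ℕ) : Fq) from
    (map_natCast _ _).symm, FiniteField.cast_card_eq_zero, map_zero]

end helpers

section qlin
variable {Fq K : Type*} [Field Fq] [Fintype Fq] [Field K] [Algebra Fq K]

lemma charP_polyK (p : ℕ) (hcp : CharP K p) : CharP (Polynomial K) p :=
  charP_of_injective_ringHom (Polynomial.C_injective (R := K)) p

lemma qlin_comp_sub (q : ℕ) (hq : q = Fintype.card Fq) (f : Polynomial K) (hf : IsqLin q f) (a : K) :
    f.comp (X - C a) = f - C (f.eval a) := by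
  obtain ⟨p, k, hp, hcp, hk, hqpk⟩ := q_pow_exists (K := K) (Fq := Fq) q hq
  haveI := hcp
  haveI := charP_polyK (K := K) p hcp
  haveI : Fact p.Prime := ⟨hp⟩
  have key : ∀ n ∈ f.support, eval₂ C (X - C a) (monomial n (f.coeff n)) =
      monomial n (f.coeff n) - C (f.coeff n * a ^ n) := by
    intro n hn
    obtain ⟨i, hi⟩ := hf n (mem_support_iff.mp hn)
    have hm : n = p ^ (k * i) := by rw [hi, hqpk, ← pow_mul]
    rw [eval₂_monomial, hm, sub_pow_char_pow, ← hm]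
    rw [← C_pow, ← C_mul_X_pow_eq_monomial, mul_sub, ← C_mul]
  conv_lhs => rw [f.as_sum_support]
  rw [Polynomial.comp, eval₂_finset_sum]
  rw [Finset.sum_congr rfl key, Finset.sum_sub_distrib, ← f.as_sum_support, ← map_sum C]
  congr 1
  rw [eval_eq_sum, Polynomial.sum_def]

lemma qlin_eval_smul (q : ℕ) (hq : q = Fintype.card Fq) (f : Polynomial K) (hf : IsqLin q f) (c : Fq) (x : K) :
    f.eval (algebraMap Fq K c * x) = algebraMap Fq K c * f.eval x := by
  subst hq
  rw [eval_eq_sum, eval_eq_sum, Polynomial.sum_def, Polynomial.sum_def, Finset.mul_sum]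
  refine Finset.sum_congr rfl fun n hn => ?_
  obtain ⟨i, hi⟩ := hf n (mem_support_iff.mp hn)
  rw [hi, mul_pow, ← map_pow, FiniteField.pow_card_pow]
  ring

lemma qlin_pow_q (q : ℕ) (hq : q = Fintype.card Fq) (f : Polynomial K) (hf : IsqLin q f) : IsqLin q (f ^ q) := by
  obtain ⟨p, k, hp, hcp, hk, hqpk⟩ := q_pow_exists (K := K) (Fq := Fq) q hq
  haveI := charP_polyK (K := K) p hcp
  haveI : Fact p.Prime := ⟨hp⟩
  haveI : ExpChar (Polynomial K) p := ExpChar.prime ‹Fact p.Prime›.1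
  intro n hn
  have hfq : f ^ q = ∑ m ∈ f.support, monomial (m * q) (f.coeff m ^ q) := by
    conv_lhs => rw [f.as_sum_support, hqpk, sum_pow_char_pow]
    exact Finset.sum_congr rfl fun m _ => by rw [← hqpk, monomial_pow]
  rw [hfq] at hn
  have : ∃ m ∈ f.support, (monomial (m * q) (f.coeff m ^ q)).coeff n ≠ 0 := by
    by_contra h
    push_neg at h
    exact hn (by rw [finset_sum_coeff]; exact Finset.sum_eq_zero h)
  obtain ⟨m, hm, hcm⟩ := this
  obtain ⟨i, hi⟩ := hf m (mem_support_iff.mp hm)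
  rw [coeff_monomial] at hcm
  have : n = m * q := by by_contra h; simp [Ne.symm h] at hcm
  exact ⟨i + 1, by rw [this, hi, pow_succ]⟩

end qlin

section line
variable {Fq K : Type*} [Field Fq] [Fintype Fq] [Field K] [Algebra Fq K]

lemma prod_X_sub_C_univ (q : ℕ) (hq : q = Fintype.card Fq) :
    (∏ c : Fq, (X - C c)) = X ^ q - X := by
  subst hq
  have h1 : (1 : ℕ) < Fintype.card Fq := Fintype.one_lt_card
  have hmonic : (X ^ Fintype.card Fq - X : Polynomial Fq).Monic :=
    monic_X_pow_sub (by simpa [degree_X] using (by exact_mod_cast h1 : (1 : WithBot ℕ) < (Fintype.card Fq : WithBot ℕ)))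
  have hroots := FiniteField.roots_X_pow_card_sub_X Fq
  have hsplits : ((X ^ Fintype.card Fq - X : Polynomial Fq)).Splits := by
    rw [splits_iff_card_roots, hroots]
    simpa [Finset.card_univ] using (FiniteField.X_pow_card_sub_X_natDegree_eq Fq h1).symm
  have := hsplits.eq_prod_roots_of_monic hmonic
  rw [hroots] at this
  rw [Finset.prod_eq_multiset_prod]
  exact this.symm

lemma line_prod (q : ℕ) (hq : q = Fintype.card Fq) (t : K) (ht : t ≠ 0) :
    (∏ c : Fq, (X - C (algebraMap Fq K c * t))) = X ^ q - C (t ^ (q - 1)) * X := by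
  have h1 : 1 < q := hq ▸ Fintype.one_lt_card
  have hA : (∏ c : Fq, (X - C (algebraMap Fq K c))) = X ^ q - X := by
    have := congrArg (Polynomial.map (algebraMap Fq K)) (prod_X_sub_C_univ q hq)
    simpa [Polynomial.map_prod] using this
  have hcomp := congrArg (fun f => f.comp (C t⁻¹ * X)) hA
  simp only [prod_comp, sub_comp, X_comp, C_comp, pow_comp] at hcomp
  have hfac : ∀ c : Fq, C t⁻¹ * X - C (algebraMap Fq K c) =
      C t⁻¹ * (X - C (algebraMap Fq K c * t)) := fun c => by
    rw [mul_sub, ← C_mul, mul_comm (t⁻¹), mul_assoc, mul_inv_cancel₀ ht, mul_one]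
  rw [Finset.prod_congr rfl (fun c _ => hfac c), Finset.prod_mul_distrib,
    Finset.prod_const, Finset.card_univ, ← hq] at hcomp
  have hct : (C t⁻¹ : Polynomial K) ^ q ≠ 0 := pow_ne_zero _ (by simp [ht])
  have := congrArg (fun f => C (t ^ q) * f) hcomp
  simp only [mul_pow, ← C_pow, mul_sub, ← mul_assoc, ← C_mul] at this
  have e1 : t ^ q * t⁻¹ ^ q = 1 := by rw [← mul_pow, mul_inv_cancel₀ ht, one_pow]
  have e2 : t ^ q * t⁻¹ = t ^ (q - 1) := by
    rw [← pow_sub_one_mul (by omega : q ≠ 0) t]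
    field_simp
  rw [e1, e2] at this
  simpa using this
end line

section master
variable {Fq K : Type*} [Field Fq] [Fintype Fq] [Field K] [Algebra Fq K]

lemma master (q : ℕ) (hq : q = Fintype.card Fq) :
    ∀ (N : ℕ) (G : Submodule Fq K) (hG : (G : Set K).Finite),
      hG.toFinset.card ≤ N → IsqLin q (∏ α ∈ hG.toFinset, (X - C α)) := by
  intro N
  induction N with
  | zero =>
    intro G hG hcard
    exfalso
    have h0 : (0 : K) ∈ hG.toFinset := by simp [Set.Finite.mem_toFinset, G.zero_mem]
    have := Finset.card_pos.mpr ⟨0, h0⟩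
    omega
  | succ N ih =>
    intro G hG hcard
    classical
    by_cases hbex : ∃ b ∈ G, b ≠ (0 : K)
    · obtain ⟨b, hb, hb0⟩ := hbex
      -- complement of the line spanned by b inside G
      obtain ⟨Q, hQ⟩ := Submodule.exists_isCompl (Submodule.span Fq {(⟨b, hb⟩ : G)})
      set G' : Submodule Fq K := Q.map G.subtype with hG'def
      have hG'le : ∀ x ∈ G', x ∈ G := by
        intro x hx
        obtain ⟨y, hy, rfl⟩ := Submodule.mem_map.mp hx
        exact y.2
      have hbG' : b ∉ G' := by
        intro hmem0
        obtain ⟨y, hyQ, hyb⟩ := Submodule.mem_map.mp hmem0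
        have hyb' : y = ⟨b, hb⟩ := Subtype.ext hyb
        subst hyb'
        have hmem : (⟨b, hb⟩ : G) ∈ Submodule.span Fq {(⟨b, hb⟩ : G)} ⊓ Q :=
          ⟨Submodule.mem_span_singleton_self _, hyQ⟩
        rw [hQ.inf_eq_bot] at hmem
        exact hb0 (by simpa using congrArg Subtype.val hmem)
      have hG'fin : (G' : Set K).Finite := hG.subset hG'le
      have hsub : hG'fin.toFinset ⊆ hG.toFinset := by
        intro x hx
        simp only [Set.Finite.mem_toFinset] at hx ⊢
        exact hG'le x hx
      have hlt : hG'fin.toFinset.card < hG.toFinset.card := by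
        refine Finset.card_lt_card ⟨hsub, fun h => hbG' ?_⟩
        have : b ∈ hG'fin.toFinset := h (by simp [Set.Finite.mem_toFinset, hb])
        simpa [Set.Finite.mem_toFinset] using this
      set P' : Polynomial K := ∏ α ∈ hG'fin.toFinset, (X - C α) with hP'def
      have IH : IsqLin q P' := ih G' hG'fin (by omega)
      -- the decomposition of the finset
      have himg : hG.toFinset =
          (Finset.univ ×ˢ hG'fin.toFinset).image (fun pc : Fq × K => pc.2 + pc.1 • b) := by
        ext x
        simp only [Set.Finite.mem_toFinset, Finset.mem_image, Finset.mem_product,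
          Finset.mem_univ, true_and, Prod.exists]
        constructor
        · intro hx
          have hx' : (⟨x, hx⟩ : G) ∈ Submodule.span Fq {(⟨b, hb⟩ : G)} ⊔ Q := by
            rw [hQ.sup_eq_top]; trivial
          obtain ⟨l, hl, z, hz, hsum⟩ := Submodule.mem_sup.mp hx'
          obtain ⟨c, hc⟩ := Submodule.mem_span_singleton.mp hl
          refine ⟨c, (z : K), ⟨by
            simp only [Set.Finite.mem_toFinset, SetLike.mem_coe]
            exact Submodule.mem_map.mpr ⟨z, hz, rfl⟩, ?_⟩⟩
          have := congrArg Subtype.val hsum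
          simp only [Submodule.coe_add] at this
          rw [← hc] at this
          simpa [add_comm] using this
        · rintro ⟨c, y, hy, rfl⟩
          exact G.add_mem (hG'le y hy) (G.smul_mem c hb)
      have hinj : ∀ x ∈ Finset.univ ×ˢ hG'fin.toFinset, ∀ y ∈ Finset.univ ×ˢ hG'fin.toFinset,
          (fun pc : Fq × K => pc.2 + pc.1 • b) x = (fun pc : Fq × K => pc.2 + pc.1 • b) y →
          x = y := by
        rintro ⟨c1, y1⟩ h1 ⟨c2, y2⟩ h2 heq
        simp only [Finset.mem_product, Finset.mem_univ, true_and,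
          Set.Finite.mem_toFinset] at h1 h2
        simp only at heq
        by_cases hc : c1 = c2
        · subst hc
          have : y1 = y2 := by simpa using add_right_cancel heq
          simp [this]
        · exfalso
          apply hbG'
          have hdiff : (c1 - c2) • b = y2 - y1 := by
            have : y1 + c1 • b - (y2 + c2 • b) = 0 := by rw [heq]; ring
            rw [sub_smul]
            linear_combination this
          have : b = (c1 - c2)⁻¹ • (y2 - y1) := by
            rw [← hdiff, smul_smul, inv_mul_cancel₀ (sub_ne_zero.mpr hc), one_smul]
          rw [this]
          exact G'.smul_mem _ (G'.sub_mem h2 h1)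
      rw [himg, Finset.prod_image hinj, Finset.prod_product]
      -- inner product is a composition
      have hinner : ∀ c : Fq, (∏ y ∈ hG'fin.toFinset, (X - C (y + c • b))) =
          P' - C (P'.eval (c • b)) := by
        intro c
        rw [← qlin_comp_sub q hq P' IH (c • b), hP'def, Polynomial.prod_comp]
        refine Finset.prod_congr rfl fun y _ => ?_
        rw [sub_comp, X_comp, C_comp, sub_sub, ← C_add, add_comm]
      simp only [hinner]
      set t : K := P'.eval b with htdef
      have heval : ∀ c : Fq, P'.eval (c • b) = c • t := by
        intro c
        rw [Algebra.smul_def, qlin_eval_smul q hq P' IH c b, htdef, Algebra.smul_def]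
      have ht : t ≠ 0 := by
        rw [htdef, hP'def, eval_prod]
        refine Finset.prod_ne_zero_iff.mpr fun y hy => ?_
        simp only [eval_sub, eval_X, eval_C]
        rw [Set.Finite.mem_toFinset] at hy
        exact sub_ne_zero.mpr (fun h => hbG' (h ▸ hy))
      simp only [heval]
      -- now it's the composition of the line polynomial with P'
      have hΦ : (∏ c : Fq, (P' - C (c • t))) =
          (∏ c : Fq, (X - C (algebraMap Fq K c * t))).comp P' := by
        rw [Polynomial.prod_comp]
        refine Finset.prod_congr rfl fun c _ => ?_
        rw [sub_comp, X_comp, C_comp, Algebra.smul_def]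
      rw [hΦ, line_prod q hq t ht, sub_comp, pow_comp, X_comp, mul_comp, C_comp, X_comp]
      intro n hn
      rw [coeff_sub] at hn
      by_cases h1 : (P' ^ q).coeff n ≠ 0
      · exact qlin_pow_q q hq P' IH n h1
      · push_neg at h1
        rw [h1, zero_sub, neg_ne_zero, coeff_C_mul] at hn
        exact IH n (fun h => hn (by rw [h, mul_zero]))
    · -- G = {0}
      push_neg at hbex
      have : hG.toFinset = {0} := by
        ext x
        simp only [Set.Finite.mem_toFinset, Finset.mem_singleton]
        exact ⟨fun hx => hbex x hx, fun hx => hx ▸ G.zero_mem⟩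
      rw [this, Finset.prod_singleton, map_zero, sub_zero]
      intro n hn
      rw [coeff_X] at hn
      refine ⟨0, ?_⟩
      rw [pow_zero]
      by_contra h
      exact hn (if_neg fun h1 => h h1.symm)
end master

section descent
variable {F : Type*} [Field F]

lemma fixed_mem_range (x : AlgebraicClosure F)
    (hsep : x ∈ separableClosure F (AlgebraicClosure F))
    (hfix : ∀ σ : AlgebraicClosure F ≃ₐ[F] AlgebraicClosure F, σ x = x) :
    x ∈ (algebraMap F (AlgebraicClosure F)).range := by
  classical
  have hint : IsIntegral F x := Algebra.IsIntegral.isIntegral x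
  have hsep' : (minpoly F x).Separable := hsep
  have hsplit : Splits ((minpoly F x).map (algebraMap F (AlgebraicClosure F))) :=
    IsAlgClosed.splits _
  have hsub : (minpoly F x).rootSet (AlgebraicClosure F) ⊆ {x} := by
    intro y hy
    have hy' : aeval y (minpoly F x) = 0 := (Polynomial.mem_rootSet.mp hy).2
    let pb := IntermediateField.adjoin.powerBasis hint
    have hgen : aeval y (minpoly F pb.gen) = 0 := by
      rwa [IntermediateField.adjoin.powerBasis_gen, IntermediateField.minpoly_gen]
    let φ := pb.lift y hgen
    let τ := φ.liftNormal (AlgebraicClosure F)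
    let σ := AlgEquiv.ofBijective τ (AlgHom.normal_bijective F (AlgebraicClosure F) _ τ)
    have e : algebraMap (IntermediateField.adjoin F {x}) (AlgebraicClosure F) pb.gen = x :=
      IntermediateField.AdjoinSimple.algebraMap_gen F x
    have hσx : σ x = y := by
      show τ x = y
      rw [← e, AlgHom.liftNormal_commutes]
      simp [φ, PowerBasis.lift_gen]
    have := hfix σ
    rw [hσx] at this
    exact this ▸ rfl
  have hxmem : x ∈ (minpoly F x).rootSet (AlgebraicClosure F) :=
    Polynomial.mem_rootSet.mpr ⟨minpoly.ne_zero hint, minpoly.aeval F x⟩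
  have heq : (minpoly F x).rootSet (AlgebraicClosure F) = {x} :=
    subset_antisymm hsub (by simpa using hxmem)
  have hcard := Polynomial.card_rootSet_eq_natDegree hsep' hsplit
  have hn : ((minpoly F x).rootSet (AlgebraicClosure F)).ncard = (minpoly F x).natDegree := by
    rw [Set.ncard_eq_toFinset_card', Set.toFinset_card, hcard]
  rw [heq, Set.ncard_singleton] at hn
  exact minpoly.natDegree_eq_one_iff.mp hn.symm
end descent

section liftP
variable {Fq F : Type*} [Field Fq] [Fintype Fq] [Field F] [Algebra Fq F]

lemma exists_lift (G : Submodule Fq (AlgebraicClosure F))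
    (hGfin : (G : Set (AlgebraicClosure F)).Finite)
    (hGsep : ∀ x ∈ G, x ∈ separableClosure F (AlgebraicClosure F))
    (hGgal : ∀ σ : AlgebraicClosure F ≃ₐ[F] AlgebraicClosure F, ∀ x ∈ G, σ x ∈ G) :
    ∃ f0 : Polynomial F, f0.map (algebraMap F (AlgebraicClosure F)) =
      ∏ α ∈ hGfin.toFinset, (X - C α) := by
  classical
  set P : Polynomial (AlgebraicClosure F) := ∏ α ∈ hGfin.toFinset, (X - C α) with hP
  have hlift : P ∈ Polynomial.lifts
      (algebraMap (separableClosure F (AlgebraicClosure F)) (AlgebraicClosure F)) := by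
    refine prod_mem fun α hα => ?_
    rw [sub_eq_add_neg, ← C_neg]
    refine add_mem (X_mem_lifts _) (C'_mem_lifts ?_)
    rw [Set.Finite.mem_toFinset] at hα
    exact ⟨⟨-α, neg_mem (hGsep α hα)⟩, rfl⟩
  obtain ⟨p, hp⟩ := (mem_lifts _).mp hlift
  have hcoeffsep : ∀ n, P.coeff n ∈ separableClosure F (AlgebraicClosure F) := by
    intro n; rw [← hp, coeff_map]; exact (p.coeff n).2
  have hfix : ∀ (σ : AlgebraicClosure F ≃ₐ[F] AlgebraicClosure F) n,
      σ (P.coeff n) = P.coeff n := by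
    intro σ n
    have himg : hGfin.toFinset.image σ = hGfin.toFinset := by
      apply Finset.eq_of_subset_of_card_le
      · intro y hy
        obtain ⟨α, hα, rfl⟩ := Finset.mem_image.mp hy
        rw [Set.Finite.mem_toFinset] at hα ⊢
        exact hGgal σ α hα
      · rw [Finset.card_image_of_injective _ σ.injective]
    have hmap : P.map σ.toAlgHom.toRingHom = P := by
      rw [hP, Polynomial.map_prod]
      have e : ∀ α ∈ hGfin.toFinset, (X - C α).map σ.toAlgHom.toRingHom = X - C (σ α) :=
        fun α _ => by simp
      rw [Finset.prod_congr rfl e]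
      conv_rhs => rw [← himg]
      exact (Finset.prod_image (f := fun x => (X : Polynomial (AlgebraicClosure F)) - C x)
        (fun a _ b _ h => σ.injective h)).symm
    have hcg := congrArg (fun pp : Polynomial (AlgebraicClosure F) => pp.coeff n) hmap
    simpa [coeff_map] using hcg
  have : P ∈ Polynomial.lifts (algebraMap F (AlgebraicClosure F)) := by
    rw [lifts_iff_coeff_lifts]
    intro n
    obtain ⟨y, hy⟩ := fixed_mem_range (P.coeff n) (hcoeffsep n) (fun σ => hfix σ n)
    exact ⟨y, hy⟩
  obtain ⟨f0, hf0⟩ := (mem_lifts _).mp this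
  exact ⟨f0, hf0⟩
end liftP

section work
variable {Fq F : Type*} [Field Fq] [Fintype Fq] [Field F] [Algebra Fq F]

lemma coeff_one_prod {K : Type*} [Field K] [DecidableEq K] (S : Finset K) (h0S : (0 : K) ∈ S) :
    (∏ α ∈ S, (X - C α)).coeff 1 = ∏ β ∈ S.erase 0, (-β) := by
  classical
  conv_lhs => rw [← Finset.insert_erase h0S]
  rw [Finset.prod_insert (Finset.notMem_erase _ _), map_zero, sub_zero]
  have h := coeff_X_mul (∏ β ∈ S.erase 0, (X - C β)) 0
  rw [show (0:ℕ) + 1 = 1 from rfl] at h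
  rw [h, coeff_zero_eq_eval_zero, eval_prod]
  exact Finset.prod_congr rfl fun β _ => by simp

open scoped Classical in
lemma workhorse (q : ℕ) (hq : q = Fintype.card Fq)
    (G : Submodule Fq (AlgebraicClosure F))
    (hGfin : (G : Set (AlgebraicClosure F)).Finite)
    (f : Polynomial F) (hlin : IsqLin q f) (h1 : f.coeff 1 = 1)
    (hroots : {β : AlgebraicClosure F | Polynomial.aeval β f = 0} =
      (G : Set (AlgebraicClosure F))) :
    f.Separable ∧ f.natDegree = hGfin.toFinset.card ∧
      f.map (algebraMap F (AlgebraicClosure F)) =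
        C (∏ β ∈ hGfin.toFinset.erase 0, (-β)⁻¹) *
          ∏ α ∈ hGfin.toFinset, (X - C α) := by
  classical
  have hf0 : f ≠ 0 := fun h => by simp [h] at h1
  have hq0 : ((q : ℕ) : F) = 0 := cast_q_eq_zero (Fq := Fq) q hq
  have hq1 : 1 < q := hq ▸ Fintype.one_lt_card
  have hder : derivative f = 1 := by
    ext n
    rw [coeff_derivative]
    cases n with
    | zero => simp [h1]
    | succ n =>
      rw [coeff_one, if_neg (by omega : ¬(n + 1 = 0))]
      by_cases hc : f.coeff (n + 1 + 1) = 0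
      · rw [hc, zero_mul]
      · obtain ⟨i, hi⟩ := hlin _ hc
        match i, hi with
        | 0, hi => rw [pow_zero] at hi; omega
        | (j+1), hi =>
          have : (((n+1 : ℕ) : F) + 1) = ((q ^ (j+1) : ℕ) : F) := by rw [← hi]; push_cast; ring
          rw [this, Nat.cast_pow, hq0, zero_pow (by omega : j + 1 ≠ 0), mul_zero]
  have hsepf : f.Separable := by
    rw [separable_def, hder]; exact isCoprime_one_right
  have hfK0 : f.map (algebraMap F (AlgebraicClosure F)) ≠ 0 :=
    (Polynomial.map_ne_zero_iff (algebraMap F _).injective).mpr hf0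
  have hsepK : (f.map (algebraMap F (AlgebraicClosure F))).Separable := hsepf.map
  have hsplitK : (f.map (algebraMap F (AlgebraicClosure F))).Splits :=
    IsAlgClosed.splits _
  have hprod := hsplitK.eq_prod_roots
  have hnodup : (f.map (algebraMap F (AlgebraicClosure F))).roots.Nodup :=
    Polynomial.nodup_roots hsepK
  have htfin : (f.map (algebraMap F (AlgebraicClosure F))).roots.toFinset = hGfin.toFinset := by
    ext β
    rw [Multiset.mem_toFinset, mem_roots hfK0, Set.Finite.mem_toFinset]
    have h2 : (f.map (algebraMap F (AlgebraicClosure F))).IsRoot β ↔ aeval β f = 0 := by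
      rw [Polynomial.IsRoot.def, eval_map, ← aeval_def]
    rw [h2]
    exact (Set.ext_iff.mp hroots β)
  have hrootsval : (f.map (algebraMap F (AlgebraicClosure F))).roots = hGfin.toFinset.val := by
    rw [← htfin, Multiset.toFinset_val, Multiset.dedup_eq_self.mpr hnodup]
  have hPmulti : ((f.map (algebraMap F (AlgebraicClosure F))).roots.map
      fun a => X - C a).prod = ∏ α ∈ hGfin.toFinset, (X - C α) := by
    rw [hrootsval]; rfl
  have h0S : (0 : AlgebraicClosure F) ∈ hGfin.toFinset :=
    (Set.Finite.mem_toFinset _).mpr G.zero_mem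
  have hu0 : (∏ β ∈ hGfin.toFinset.erase 0, (-β)) ≠ 0 :=
    Finset.prod_ne_zero_iff.mpr fun β hβ => neg_ne_zero.mpr (Finset.ne_of_mem_erase hβ)
  have hP1 := coeff_one_prod hGfin.toFinset h0S
  have hlc : (f.map (algebraMap F (AlgebraicClosure F))).leadingCoeff *
      (∏ β ∈ hGfin.toFinset.erase 0, (-β)) = 1 := by
    have hcg := congrArg (fun p : Polynomial (AlgebraicClosure F) => p.coeff 1) hprod
    rw [hPmulti, coeff_C_mul, hP1] at hcg
    rw [← hcg, coeff_map, h1, map_one]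
  have hlceq : (f.map (algebraMap F (AlgebraicClosure F))).leadingCoeff =
      ∏ β ∈ hGfin.toFinset.erase 0, (-β)⁻¹ := by
    rw [Finset.prod_inv_distrib]
    rw [inv_eq_one_div, eq_div_iff hu0]
    exact hlc
  have hmapeq : f.map (algebraMap F (AlgebraicClosure F)) =
      C (∏ β ∈ hGfin.toFinset.erase 0, (-β)⁻¹) * ∏ α ∈ hGfin.toFinset, (X - C α) := by
    rw [hprod, hPmulti, hlceq]
  have hdeg : f.natDegree = hGfin.toFinset.card := by
    rw [show f.natDegree = (f.map (algebraMap F (AlgebraicClosure F))).natDegree from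
      (natDegree_map _).symm, hmapeq]
    have hcne : (∏ β ∈ hGfin.toFinset.erase 0, (-β)⁻¹) ≠ 0 := by
      rw [Finset.prod_inv_distrib]; exact inv_ne_zero hu0
    rw [natDegree_C_mul hcne, natDegree_prod _ _ (fun α _ => X_sub_C_ne_zero α)]
    rw [Finset.sum_congr rfl fun α _ => natDegree_X_sub_C α, Finset.sum_const, smul_eq_mul,
      mul_one]
  exact ⟨hsepf, hdeg, hmapeq⟩
end work

open scoped Classical in
theorem stmt10 {Fq F : Type*} [Field Fq] [Fintype Fq] [Field F] [Algebra Fq F]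
    (q : ℕ) (hq : q = Fintype.card Fq)
    (G : Submodule Fq (AlgebraicClosure F))
    (hGfin : (G : Set (AlgebraicClosure F)).Finite)
    (hGsep : ∀ x ∈ G, x ∈ separableClosure F (AlgebraicClosure F))
    (hGgal : ∀ σ : AlgebraicClosure F ≃ₐ[F] AlgebraicClosure F, ∀ x ∈ G, σ x ∈ G) :
    (∃! f : Polynomial F, IsqLin q f ∧ f.coeff 1 = 1 ∧
      {β : AlgebraicClosure F | Polynomial.aeval β f = 0} =
        (G : Set (AlgebraicClosure F))) ∧
    ∀ f : Polynomial F,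
      (IsqLin q f ∧ f.coeff 1 = 1 ∧
        {β : AlgebraicClosure F | Polynomial.aeval β f = 0} =
          (G : Set (AlgebraicClosure F))) →
      f.Separable ∧ f.natDegree = hGfin.toFinset.card ∧
        f.natDegree = q ^ (Module.finrank Fq ↥G) ∧
        f.map (algebraMap F (AlgebraicClosure F)) =
          Polynomial.C (∏ β ∈ hGfin.toFinset.erase 0, (-β)⁻¹) *
            ∏ α ∈ hGfin.toFinset, (Polynomial.X - Polynomial.C α) := by
  classical
  obtain ⟨f0, hf0map⟩ := exists_lift G hGfin hGsep hGgal
  have hqlinP : IsqLin q (∏ α ∈ hGfin.toFinset, (X - C α)) :=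
    master q hq hGfin.toFinset.card G hGfin le_rfl
  have h0S : (0 : AlgebraicClosure F) ∈ hGfin.toFinset :=
    (Set.Finite.mem_toFinset _).mpr G.zero_mem
  have hu0 : (∏ β ∈ hGfin.toFinset.erase 0, (-β)) ≠ 0 :=
    Finset.prod_ne_zero_iff.mpr fun β hβ => neg_ne_zero.mpr (Finset.ne_of_mem_erase hβ)
  have hc : algebraMap F (AlgebraicClosure F) (f0.coeff 1) =
      ∏ β ∈ hGfin.toFinset.erase 0, (-β) := by
    rw [← coeff_one_prod hGfin.toFinset h0S, ← hf0map, coeff_map]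
  have hc0 : f0.coeff 1 ≠ 0 := fun h => hu0 (by rw [← hc, h, map_zero])
  set f : Polynomial F := C (f0.coeff 1)⁻¹ * f0 with hfdef
  have hlin : IsqLin q f := by
    intro n hn
    rw [hfdef, coeff_C_mul] at hn
    have h2 : f0.coeff n ≠ 0 := fun h => hn (by rw [h, mul_zero])
    have h3 : (∏ α ∈ hGfin.toFinset, (X - C α)).coeff n ≠ 0 := by
      rw [← hf0map, coeff_map]
      exact fun h => h2 ((algebraMap F _).injective (by rw [h, map_zero]))
    exact hqlinP n h3
  have h1 : f.coeff 1 = 1 := by rw [hfdef, coeff_C_mul, inv_mul_cancel₀ hc0]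
  have hroots : {β : AlgebraicClosure F | aeval β f = 0} =
      (G : Set (AlgebraicClosure F)) := by
    ext β
    simp only [Set.mem_setOf_eq, SetLike.mem_coe]
    have he : aeval β f = (algebraMap F (AlgebraicClosure F) (f0.coeff 1))⁻¹ *
        eval β (∏ α ∈ hGfin.toFinset, (X - C α)) := by
      rw [hfdef, map_mul, aeval_C, map_inv₀, aeval_def, ← eval_map, hf0map]
    have hinv : (algebraMap F (AlgebraicClosure F) (f0.coeff 1))⁻¹ ≠ 0 :=
      inv_ne_zero (fun h => hc0 ((algebraMap F _).injective (by rw [h, map_zero])))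
    rw [he, mul_eq_zero]
    constructor
    · rintro (h | h)
      · exact absurd h hinv
      · rw [eval_prod, Finset.prod_eq_zero_iff] at h
        obtain ⟨α, hα, hval⟩ := h
        simp only [eval_sub, eval_X, eval_C] at hval
        rw [sub_eq_zero.mp hval]
        exact (Set.Finite.mem_toFinset _).mp hα
    · intro hβ
      right
      rw [eval_prod]
      refine Finset.prod_eq_zero ((Set.Finite.mem_toFinset _).mpr hβ) ?_
      simp
  have hpart2 : ∀ g : Polynomial F,
      (IsqLin q g ∧ g.coeff 1 = 1 ∧
        {β : AlgebraicClosure F | Polynomial.aeval β g = 0} =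
          (G : Set (AlgebraicClosure F))) →
      g.Separable ∧ g.natDegree = hGfin.toFinset.card ∧
        g.natDegree = q ^ (Module.finrank Fq ↥G) ∧
        g.map (algebraMap F (AlgebraicClosure F)) =
          Polynomial.C (∏ β ∈ hGfin.toFinset.erase 0, (-β)⁻¹) *
            ∏ α ∈ hGfin.toFinset, (Polynomial.X - Polynomial.C α) := by
    rintro g ⟨hg1, hg2, hg3⟩
    obtain ⟨hsep, hdeg, hmapeq⟩ := workhorse q hq G hGfin g hg1 hg2 hg3
    refine ⟨hsep, hdeg, ?_, hmapeq⟩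
    rw [hdeg]
    haveI : Fintype ↥G := hGfin.fintype
    have e1 : hGfin.toFinset.card = Nat.card ↥(G : Set (AlgebraicClosure F)) := by
      rw [Nat.card_coe_set_eq, Set.ncard_eq_toFinset_card _ hGfin]
    have e2 : Nat.card ↥(G : Set (AlgebraicClosure F)) = Fintype.card ↥G :=
      Nat.card_eq_fintype_card
    have e3 : Fintype.card ↥G = Fintype.card Fq ^ Module.finrank Fq ↥G :=
      Module.card_eq_pow_finrank
    rw [e1, e2, e3, hq]
  refine ⟨⟨f, ⟨hlin, h1, hroots⟩, fun g hg => ?_⟩, hpart2⟩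
  have hgm := (hpart2 g hg).2.2.2
  have hfm := (hpart2 f ⟨hlin, h1, hroots⟩).2.2.2
  apply Polynomial.map_injective _ (algebraMap F (AlgebraicClosure F)).injective
  rw [hgm, hfm]
end

section
/- Let d, f ∈ F[X] be nonzero q-linearized polynomials whose coefficients of X are nonzero (hence both are separable). Then there exists a q-linearized polynomial g ∈ F[X] with f = g ∘ d (polynomial composition) if and only if every root of d in F̄ is a root of f, i.e., ker(d) ⊆ ker(f). -/
open Polynomial

section Aux

variable {F : Type*} [Field F] {q : ℕ}

lemma IsqLin.coeff_zero (hq2 : 2 ≤ q) {f : Polynomial F} (hf : IsqLin q f) :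
    f.coeff 0 = 0 := by
  by_contra h
  obtain ⟨i, hi⟩ := hf 0 h
  exact absurd hi.symm (pow_ne_zero i (by omega))

lemma IsqLin.sub {f g : Polynomial F} (hf : IsqLin q f) (hg : IsqLin q g) :
    IsqLin q (f - g) := by
  intro n hn
  rw [coeff_sub] at hn
  rcases ne_or_eq (f.coeff n) 0 with h | h
  · exact hf n h
  · exact hg n (by simpa [h] using hn)

lemma IsqLin.add {f g : Polynomial F} (hf : IsqLin q f) (hg : IsqLin q g) :
    IsqLin q (f + g) := by
  intro n hn
  rw [coeff_add] at hn
  rcases ne_or_eq (f.coeff n) 0 with h | h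
  · exact hf n h
  · exact hg n (by simpa [h] using hn)

lemma isqLin_C_mul_X_pow (c : F) (j : ℕ) : IsqLin q (C c * X ^ (q ^ j)) := by
  intro n hn
  rw [coeff_C_mul, coeff_X_pow] at hn
  by_cases h : n = q ^ j
  · exact ⟨j, h⟩
  · simp [h] at hn

/-- In characteristic `p` with `q = p ^ e`, the `q`-th power of a `q`-linearized
polynomial is `q`-linearized. -/
lemma IsqLin.pow_q {p e : ℕ} [hp : Fact p.Prime] [CharP F p] (hqe : q = p ^ e)
    {f : Polynomial F} (hf : IsqLin q f) : IsqLin q (f ^ q) := by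
  intro n hn
  have hq0 : 0 < q := by
    rw [hqe]; exact pow_pos hp.out.pos e
  have hmap := Polynomial.map_iterateFrobenius_expand p f e
  rw [← hqe] at hmap
  rw [← hmap] at hn
  rw [coeff_map, coeff_expand hq0] at hn
  by_cases hdvd : q ∣ n
  · rw [if_pos hdvd] at hn
    have h2 : f.coeff (n / q) ≠ 0 := by
      intro h; rw [h] at hn; simp at hn
    obtain ⟨i, hi⟩ := hf _ h2
    exact ⟨i + 1, by rw [← Nat.div_mul_cancel hdvd, hi, pow_succ]⟩
  · rw [if_neg hdvd] at hn; simp at hn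

lemma IsqLin.pow_q_pow {p e : ℕ} [hp : Fact p.Prime] [CharP F p] (hqe : q = p ^ e)
    {f : Polynomial F} (hf : IsqLin q f) (j : ℕ) : IsqLin q (f ^ q ^ j) := by
  induction j with
  | zero => simpa using hf
  | succ j ih =>
      have : f ^ q ^ (j + 1) = (f ^ q ^ j) ^ q := by
        rw [← pow_mul, pow_succ]
      rw [this]
      exact ih.pow_q hqe

/-- Division with remainder in the twisted (linearized) setting. -/
lemma linearized_div {p e : ℕ} [hp : Fact p.Prime] [CharP F p] (hqe : q = p ^ e)
    (hq2 : 2 ≤ q) (d : Polynomial F) (hd : IsqLin q d) (hd0 : d ≠ 0) :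
    ∀ f : Polynomial F, IsqLin q f →
      ∃ g r : Polynomial F, IsqLin q g ∧ IsqLin q r ∧ f = g.comp d + r ∧
        r.degree < d.degree := by
  have hdbot : (⊥ : WithBot ℕ) < d.degree := by
    simpa [bot_lt_iff_ne_bot, degree_eq_bot] using hd0
  suffices H : ∀ N : ℕ, ∀ f : Polynomial F, f.natDegree = N → IsqLin q f →
      ∃ g r : Polynomial F, IsqLin q g ∧ IsqLin q r ∧ f = g.comp d + r ∧
        r.degree < d.degree from fun f hf => H f.natDegree f rfl hf
  intro N
  induction N using Nat.strong_induction_on with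
  | _ N ih =>
  intro f hN hf
  subst hN
  by_cases hf0 : f = 0
  · exact ⟨0, 0, by simp [IsqLin], by simp [IsqLin], by simp [hf0], hdbot⟩
  by_cases hlt : f.degree < d.degree
  · exact ⟨0, f, by simp [IsqLin], hf, by simp, hlt⟩
  push_neg at hlt
  -- leading degrees are powers of q
  obtain ⟨n, hn⟩ := hf f.natDegree (leadingCoeff_ne_zero.mpr hf0)
  obtain ⟨k, hk⟩ := hd d.natDegree (leadingCoeff_ne_zero.mpr hd0)
  have hkn : k ≤ n := by
    have h1 : d.natDegree ≤ f.natDegree := natDegree_le_natDegree hlt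
    rw [hn, hk] at h1
    exact (pow_le_pow_iff_right₀ (by omega)).mp h1
  set j := n - k with hj
  set c : F := f.leadingCoeff * (d.leadingCoeff ^ q ^ j)⁻¹ with hc
  have hdlc : d.leadingCoeff ≠ 0 := leadingCoeff_ne_zero.mpr hd0
  have hflc : f.leadingCoeff ≠ 0 := leadingCoeff_ne_zero.mpr hf0
  have hc0 : c ≠ 0 := mul_ne_zero hflc (inv_ne_zero (pow_ne_zero _ hdlc))
  have hsubdeg : (C c * d ^ q ^ j).natDegree = f.natDegree := by
    rw [natDegree_C_mul hc0, natDegree_pow, hk, hn, ← pow_add]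
    congr 1
    omega
  have hsub0 : C c * d ^ q ^ j ≠ 0 := mul_ne_zero (by simpa using hc0) (pow_ne_zero _ hd0)
  have hdegeq : f.degree = (C c * d ^ q ^ j).degree := by
    rw [degree_eq_natDegree hf0, degree_eq_natDegree hsub0, hsubdeg]
  have hlceq : f.leadingCoeff = (C c * d ^ q ^ j).leadingCoeff := by
    rw [leadingCoeff_mul, leadingCoeff_pow, leadingCoeff_C, hc]
    field_simp
  set f' := f - C c * d ^ q ^ j with hf'
  have hf'lin : IsqLin q f' := hf.sub (fun m hm => by
    rw [coeff_C_mul] at hm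
    exact (hd.pow_q_pow hqe j) m (right_ne_zero_of_mul hm))
  have hdeglt : f'.degree < f.degree := degree_sub_lt hdegeq hf0 hlceq
  have hkey : f = (C c * X ^ q ^ j).comp d + f' := by
    rw [hf', mul_comp, C_comp, X_pow_comp]
    ring
  by_cases hf'0 : f' = 0
  · exact ⟨C c * X ^ q ^ j, 0, isqLin_C_mul_X_pow c j, by simp [IsqLin],
      by simpa [hf'0] using hkey, hdbot⟩
  · have hnd : f'.natDegree < f.natDegree := natDegree_lt_natDegree hf'0 hdeglt
    obtain ⟨g', r, hg', hr, heq, hrd⟩ := ih f'.natDegree hnd f' rfl hf'lin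
    refine ⟨C c * X ^ q ^ j + g', r, (isqLin_C_mul_X_pow c j).add hg', hr, ?_, hrd⟩
    rw [add_comp, hkey, heq]
    ring

end Aux

theorem stmt11 {Fq F : Type*} [Field Fq] [Fintype Fq] [Field F] [Algebra Fq F]
    (q : ℕ) (hq : q = Fintype.card Fq)
    (d f : Polynomial F) (hd : IsqLin q d) (hf : IsqLin q f)
    (hd0 : d ≠ 0) (hf0 : f ≠ 0)
    (hd1 : d.coeff 1 ≠ 0) (hf1 : f.coeff 1 ≠ 0) :
    (∃ g : Polynomial F, IsqLin q g ∧ f = g.comp d) ↔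
      (∀ β : AlgebraicClosure F, Polynomial.aeval β d = 0 → Polynomial.aeval β f = 0) := by
  have hq2 : 2 ≤ q := by rw [hq]; exact Fintype.one_lt_card
  set p := ringChar Fq with hp
  obtain ⟨e, hpp, hcard⟩ := FiniteField.card Fq p
  haveI : Fact p.Prime := ⟨hpp⟩
  have hqe : q = p ^ (e : ℕ) := by rw [hq, hcard]
  haveI : CharP F p := charP_of_injective_algebraMap (algebraMap Fq F).injective p
  have hqF : (q : F) = 0 := by
    rw [hqe]
    push_cast
    rw [CharP.cast_eq_zero F p]
    exact zero_pow (by exact_mod_cast e.ne_zero)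
  constructor
  · rintro ⟨g, hg, rfl⟩ β hβ
    rw [aeval_comp, hβ, aeval_def, eval₂_at_zero, hg.coeff_zero hq2, map_zero]
  · intro hroots
    obtain ⟨g, r, hg, hr, heq, hrd⟩ := linearized_div hqe hq2 d hd hd0 f hf
    have hr0 : r = 0 := by
      classical
      by_contra hrne
      set K := AlgebraicClosure F
      set dK := d.map (algebraMap F K) with hdK
      set rK := r.map (algebraMap F K) with hrK
      -- d is separable: its derivative is the nonzero constant d.coeff 1
      have hder : derivative d = C (d.coeff 1) := by
        ext m
        rw [coeff_derivative]
        cases m with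
        | zero => simp
        | succ m =>
          rw [coeff_C, if_neg (Nat.succ_ne_zero m)]
          by_cases hnz : d.coeff (m + 1 + 1) = 0
          · simp [hnz]
          · obtain ⟨i, hi⟩ := hd _ hnz
            have hi1 : 1 ≤ i := by
              by_contra h
              push_neg at h
              interval_cases i
              · simp at hi
            have hzero : ((m + 1 + 1 : ℕ) : F) = 0 := by
              rw [hi]
              push_cast
              rw [hqF]
              exact zero_pow (by omega)
            push_cast at hzero ⊢
            rw [hzero, mul_zero]
      have hsep : d.Separable :=
        ⟨0, C (d.coeff 1)⁻¹, by
          rw [hder, zero_mul, zero_add, ← C_mul, inv_mul_cancel₀ hd1, C_1]⟩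
      have hsplit : Splits dK := IsAlgClosed.splits dK
      have hcardroots : d.natDegree = Multiset.card dK.roots :=
        by rw [← natDegree_map (algebraMap F K)]; exact hsplit.natDegree_eq_card_roots
      have hnodup : dK.roots.Nodup := nodup_roots (hsep.map (f := algebraMap F K))
      have hdK0 : dK ≠ 0 := Polynomial.map_ne_zero hd0
      have hrK0 : rK ≠ 0 := Polynomial.map_ne_zero hrne
      have hsubset : dK.roots.toFinset ⊆ rK.roots.toFinset := by
        intro β hβ
        rw [Multiset.mem_toFinset, mem_roots hdK0] at hβ
        rw [Multiset.mem_toFinset, mem_roots hrK0]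
        have hβd : Polynomial.aeval β d = 0 := by
          rwa [aeval_def, ← eval_map, ← hdK]
        have hβf : Polynomial.aeval β f = 0 := hroots β hβd
        have hβr : Polynomial.aeval β r = 0 := by
          have := congrArg (Polynomial.aeval β) heq
          rw [map_add, hβf, aeval_comp, hβd, aeval_def, eval₂_at_zero,
            hg.coeff_zero hq2, map_zero, zero_add] at this
          exact this.symm
        rw [IsRoot, hrK, eval_map, ← aeval_def]; exact hβr
      have h1 : d.natDegree ≤ r.natDegree := by
        calc d.natDegree = dK.roots.toFinset.card := by
              rw [hcardroots, Multiset.toFinset_card_of_nodup hnodup]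
          _ ≤ rK.roots.toFinset.card := Finset.card_le_card hsubset
          _ ≤ Multiset.card rK.roots := rK.roots.toFinset_card_le
          _ ≤ rK.natDegree := card_roots' rK
          _ = r.natDegree := natDegree_map (algebraMap F K)
      have h2 : r.natDegree < d.natDegree := natDegree_lt_natDegree hrne hrd
      omega
    exact ⟨g, hg, by rw [heq, hr0, add_zero]⟩
end

section
/- Let F be a field containing 𝔽q, equipped with a discrete non-archimedean additive valuation ν : F → ℤ ∪ {∞} with ν(F^*) = ℤ. Let r ≥ 1 and g₁, …, g_r ∈ F with g_r ≠ 0. Then the following are equivalent: (i) there exists c ∈ F^* such that ν(c^{q^i − 1} g_i) ≥ 0 for all 1 ≤ i ≤ r and min{ν(c^{q^i − 1} g_i) : 1 ≤ i ≤ r, g_i ≠ 0} = 0; (ii) −min{ν(g_i)/(q^i − 1) : 1 ≤ i ≤ r, g_i ≠ 0} ∈ ℤ. (In Drinfeld-module terms: the Drinfeld module φ with φ_T = T X + Σ_{i=1}^r g_i X^{q^i} has stable reduction at ν if and only if its local graded height h^ν_Gr(φ) = −min_i ν(g_i)/(q^i−1) is an integer.) -/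
theorem stmt18 {Fq F : Type*} [Field Fq] [Fintype Fq] [Field F] [Algebra Fq F]
    (q : ℕ) (hq : q = Fintype.card Fq)
    (ν : F → ℤ)
    (hmul : ∀ x y : F, x ≠ 0 → y ≠ 0 → ν (x * y) = ν x + ν y)
    (hadd : ∀ x y : F, x ≠ 0 → y ≠ 0 → x + y ≠ 0 → min (ν x) (ν y) ≤ ν (x + y))
    (hsurj : ∀ n : ℤ, ∃ x : F, x ≠ 0 ∧ ν x = n)
    (r : ℕ) (hr : 1 ≤ r) (g : ℕ → F) (hgr : g r ≠ 0) :
    (∃ c : F, c ≠ 0 ∧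
        (∀ i : ℕ, 1 ≤ i → i ≤ r → g i ≠ 0 → 0 ≤ ν (c ^ (q ^ i - 1) * g i)) ∧
        (∃ i : ℕ, 1 ≤ i ∧ i ≤ r ∧ g i ≠ 0 ∧ ν (c ^ (q ^ i - 1) * g i) = 0)) ↔
      (∃ n : ℤ, (n : ℝ) =
        - sInf {y : ℝ | ∃ i : ℕ, 1 ≤ i ∧ i ≤ r ∧ g i ≠ 0 ∧
            y = (ν (g i) : ℝ) / ((q : ℝ) ^ i - 1)}) := by
  have hq2 : 2 ≤ q := by
    rw [hq]; exact Fintype.one_lt_card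
  -- basic facts about ν
  have hν1 : ν 1 = 0 := by
    have := hmul 1 1 one_ne_zero one_ne_zero
    rw [mul_one] at this; omega
  have hpow : ∀ (c : F), c ≠ 0 → ∀ n : ℕ, ν (c ^ n) = (n : ℤ) * ν c := by
    intro c hc n
    induction n with
    | zero => simp [hν1]
    | succ n ih =>
      rw [pow_succ, hmul _ _ (pow_ne_zero _ hc) hc, ih]
      push_cast; ring
  have hqpow : ∀ i : ℕ, 1 ≤ i → 1 ≤ q ^ i := fun i _ => Nat.one_le_pow _ _ (by omega)
  have hval : ∀ (c : F), c ≠ 0 → ∀ i : ℕ, 1 ≤ i → g i ≠ 0 →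
      ν (c ^ (q ^ i - 1) * g i) = ((q : ℤ) ^ i - 1) * ν c + ν (g i) := by
    intro c hc i hi hgi
    rw [hmul _ _ (pow_ne_zero _ hc) hgi, hpow c hc]
    congr 1
    have : ((q ^ i - 1 : ℕ) : ℤ) = (q : ℤ) ^ i - 1 := by
      have := hqpow i hi; push_cast [this]; ring
    rw [this]
  have hposR : ∀ i : ℕ, 1 ≤ i → (0 : ℝ) < (q : ℝ) ^ i - 1 := by
    intro i hi
    have h1 : (1 : ℝ) < (q : ℝ) := by exact_mod_cast (by omega : 1 < q)
    have := one_lt_pow₀ h1 (by omega : i ≠ 0)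
    linarith
  -- key bridge between the integer inequality and the real one
  have hbridge : ∀ (m : ℤ) (i : ℕ), 1 ≤ i →
      ((0 : ℤ) ≤ ((q : ℤ) ^ i - 1) * m + ν (g i) ↔
        -(m : ℝ) ≤ (ν (g i) : ℝ) / ((q : ℝ) ^ i - 1)) := by
    intro m i hi
    have hp := hposR i hi
    rw [le_div_iff₀ hp]
    constructor
    · intro h
      have hR : (0 : ℝ) ≤ ((q : ℝ) ^ i - 1) * (m : ℝ) + (ν (g i) : ℝ) := by
        exact_mod_cast h
      nlinarith
    · intro h
      have hR : (0 : ℝ) ≤ ((q : ℝ) ^ i - 1) * (m : ℝ) + (ν (g i) : ℝ) := by nlinarith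
      exact_mod_cast hR
  set A : Set ℝ := {y : ℝ | ∃ i : ℕ, 1 ≤ i ∧ i ≤ r ∧ g i ≠ 0 ∧
      y = (ν (g i) : ℝ) / ((q : ℝ) ^ i - 1)} with hA
  have hAne : A.Nonempty := ⟨_, r, hr, le_refl r, hgr, rfl⟩
  have hAfin : A.Finite := by
    have : A ⊆ (fun i : ℕ => (ν (g i) : ℝ) / ((q : ℝ) ^ i - 1)) '' (Set.Icc 1 r) := by
      rintro y ⟨i, h1, h2, _, rfl⟩
      exact ⟨i, ⟨h1, h2⟩, rfl⟩
    exact Set.Finite.subset ((Set.finite_Icc 1 r).image _) this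
  constructor
  · rintro ⟨c, hc, hge, i₀, hi₀1, hi₀r, hgi₀, heq⟩
    refine ⟨ν c, ?_⟩
    rw [hval c hc i₀ hi₀1 hgi₀] at heq
    have hmem : -(ν c : ℝ) ∈ A := by
      refine ⟨i₀, hi₀1, hi₀r, hgi₀, ?_⟩
      have hp := hposR i₀ hi₀1
      have hR : ((q : ℝ) ^ i₀ - 1) * (ν c : ℝ) + (ν (g i₀) : ℝ) = 0 := by
        exact_mod_cast heq
      field_simp
      linarith
    have hlb : ∀ y ∈ A, -(ν c : ℝ) ≤ y := by
      rintro y ⟨i, h1, h2, h3, rfl⟩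
      have := hge i h1 h2 h3
      rw [hval c hc i h1 h3] at this
      exact (hbridge (ν c) i h1).mp this
    have : sInf A = -(ν c : ℝ) :=
      le_antisymm (csInf_le hAfin.bddBelow hmem) (le_csInf hAne hlb)
    rw [this]; ring
  · rintro ⟨n, hn⟩
    obtain ⟨c, hc, hνc⟩ := hsurj n
    have hmem := hAne.csInf_mem hAfin
    obtain ⟨i₀, hi₀1, hi₀r, hgi₀, hi₀eq⟩ := hmem
    refine ⟨c, hc, ?_, i₀, hi₀1, hi₀r, hgi₀, ?_⟩
    · intro i h1 h2 h3
      rw [hval c hc i h1 h3, hνc]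
      refine (hbridge n i h1).mpr ?_
      have : sInf A ≤ (ν (g i) : ℝ) / ((q : ℝ) ^ i - 1) :=
        csInf_le hAfin.bddBelow ⟨i, h1, h2, h3, rfl⟩
      rw [hn]
      linarith
    · rw [hval c hc i₀ hi₀1 hgi₀, hνc]
      have hp := hposR i₀ hi₀1
      have hR : ((q : ℝ) ^ i₀ - 1) * (n : ℝ) + (ν (g i₀) : ℝ) = 0 := by
        rw [hn, hi₀eq]
        field_simp
        ring
      exact_mod_cast hR
end
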